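/- For a graph G on n vertices with adjacency matrix A, the graph G ⊛ J_m with adjacency matrix (A + I_n) ⊗ J_m − I_{nm} has spectrum {[mλ₁+m−1]^{m₁}, …, [mλ_t+m−1]^{m_t}, [−1]^{nm−n}} whenever G has spectrum {[λ₁]^{m₁}, …, [λ_t]^{m_t}}. -/

import Mathlib

open Polynomial

noncomputable def adjm {V : Type*} [Fintype V] [DecidableEq V] (G : SimpleGraph V) :
    Matrix V V ℝ :=
  @SimpleGraph.adjMatrix ℝ V G (Classical.decRel _) _ _

/-- The adjacency spectrum of `G`, as a multiset of real roots of the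
characteristic polynomial (so multiplicities are counted). -/
noncomputable def spec {V : Type*} [Fintype V] [DecidableEq V] (G : SimpleGraph V) :
    Multiset ℝ :=
  (adjm G).charpoly.roots

/-- `G` is `k`-regular: every vertex has exactly `k` neighbours. -/
def IsReg {V : Type*} (G : SimpleGraph V) (k : ℕ) : Prop :=
  ∀ v : V, (G.neighborSet v).ncard = k

section Aux

open Matrix

variable {R : Type*} [CommRing R] {ι : Type*} [Fintype ι] [DecidableEq ι]

lemma charpoly_conj' (P N Q : Matrix ι ι R) (h1 : P * Q = 1) :
    (P * N * Q).charpoly = N.charpoly := by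
  have hPQ : P.map C * Q.map C = 1 := by
    rw [← Matrix.map_mul, h1]; simp [Matrix.map_one]
  have hQP : Q.map C * P.map C = 1 := mul_eq_one_comm.mp hPQ
  unfold Matrix.charpoly
  have key : charmatrix (P * N * Q) = P.map C * charmatrix N * Q.map C := by
    unfold charmatrix
    simp only [RingHom.mapMatrix_apply]
    rw [mul_sub, sub_mul]
    congr 1
    · rw [mul_assoc, (Matrix.scalar_commute X (fun M => (Commute.all _ M)) _).eq,
        ← mul_assoc, hPQ, one_mul]
    · rw [← Matrix.map_mul, ← Matrix.map_mul]
  rw [key, det_mul, det_mul, mul_comm, ← mul_assoc, ← det_mul, hQP, det_one, one_mul]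

lemma charpoly_diag (d : ι → R) :
    (Matrix.diagonal d).charpoly = ∏ i, (X - C (d i)) := by
  have h : charmatrix (Matrix.diagonal d) = Matrix.diagonal fun i => X - C (d i) := by
    ext i j
    by_cases h : i = j
    · subst h; simp [charmatrix_apply_eq]
    · simp [charmatrix_apply_ne _ _ _ h, Matrix.diagonal_apply_ne _ h]
  rw [Matrix.charpoly, h, det_diagonal]

lemma roots_prod_X_sub_C'' (g : ι → ℝ) :
    (∏ i, (X - C (g i))).roots = Finset.univ.val.map g := by
  rw [show (∏ i, (X - C (g i))) = ((Finset.univ.val.map g).map (fun a => X - C a)).prod by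
    rw [Multiset.map_map]; rfl]
  exact roots_multiset_prod_X_sub_C _

end Aux

section Jm

open Matrix

variable {m : ℕ} [NeZero m]

noncomputable def Vm (m : ℕ) [NeZero m] : Matrix (Fin m) (Fin m) ℝ :=
  Matrix.of fun i j => if j = 0 then 1 else (if i = 0 then (1:ℝ) else 0) - (if i = j then 1 else 0)

noncomputable def Wm (m : ℕ) [NeZero m] : Matrix (Fin m) (Fin m) ℝ :=
  Matrix.of fun i j => if i = 0 then (m:ℝ)⁻¹ else (m:ℝ)⁻¹ - (if i = j then 1 else 0)

noncomputable def Em (m : ℕ) [NeZero m] : Matrix (Fin m) (Fin m) ℝ :=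
  Matrix.diagonal fun j => if j = 0 then (m:ℝ) else 0

lemma Wm_apply (i x : Fin m) : Wm m i x =
    (m:ℝ)⁻¹ - (if i = x then 1 else 0) + (if i = 0 then 1 else 0) * (if x = 0 then 1 else 0) := by
  simp only [Wm, Matrix.of_apply]
  by_cases hi : i = 0 <;> by_cases hx : x = 0 <;>
    simp [hi, hx, eq_comm] <;> ring

lemma Vm_col0 (i : Fin m) : Vm m i 0 = 1 := by
  by_cases hi : i = 0 <;> simp [Vm, hi]

lemma Vm_row0 (j : Fin m) : Vm m 0 j = 1 := by
  by_cases hj : j = 0 <;> simp [Vm, hj, eq_comm]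

lemma Vm_apply_delta (i j : Fin m) (hi : i ≠ 0) :
    Vm m i j = (if j = 0 then 1 else 0) - (if j = i then 1 else 0) := by
  by_cases hj : j = 0
  · subst hj; simp [Vm, Ne.symm hi]
  · by_cases hij : i = j <;> simp [Vm, hj, hi, hij, eq_comm]

lemma Vm_rowsum (i : Fin m) : ∑ j, Vm m i j = if i = 0 then (m:ℝ) else 0 := by
  by_cases hi : i = 0
  · subst hi; simp [Vm_row0]
  · rw [Finset.sum_congr rfl (fun j _ => Vm_apply_delta i j hi)]
    simp [Finset.sum_sub_distrib, hi]

lemma Vm_colsum (j : Fin m) : ∑ i, Vm m i j = if j = 0 then (m:ℝ) else 0 := by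
  by_cases hj : j = 0
  · subst hj; simp [Vm_col0]
  · have h : ∀ i, Vm m i j = (if i = 0 then 1 else 0) - (if i = j then 1 else 0) := by
      intro i; simp [Vm, hj]
    rw [Finset.sum_congr rfl (fun i _ => h i)]
    simp [Finset.sum_sub_distrib, hj]

lemma VW : Vm m * Wm m = 1 := by
  have hm : (m:ℝ) ≠ 0 := Nat.cast_ne_zero.mpr (NeZero.ne m)
  ext i j
  rw [Matrix.mul_apply]
  have h : ∀ x, Vm m i x * Wm m x j
      = (m:ℝ)⁻¹ * Vm m i x - (if x = j then Vm m i x else 0) +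
        (if j = 0 then 1 else 0) * (if x = 0 then Vm m i x else 0) := by
    intro x
    rw [Wm_apply]
    by_cases hxj : x = j <;> by_cases hx0 : x = 0 <;> by_cases hj0 : j = 0 <;>
      simp [hxj, hx0, hj0, eq_comm] <;> ring
  rw [Finset.sum_congr rfl (fun x _ => h x)]
  rw [Finset.sum_add_distrib, Finset.sum_sub_distrib, ← Finset.mul_sum, ← Finset.mul_sum,
    Vm_rowsum, Finset.sum_ite_eq' Finset.univ j (fun x => Vm m i x),
    Finset.sum_ite_eq' Finset.univ (0 : Fin m) (fun x => Vm m i x)]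
  simp only [Finset.mem_univ, if_true, Vm_col0, mul_one]
  by_cases hi : i = 0 <;> by_cases hj : j = 0 <;>
    simp [hi, hj, Matrix.one_apply, Vm_row0, Vm_col0, hm, Vm_apply_delta i j, eq_comm] <;>
    ring

lemma JVW : (Matrix.of fun _ _ : Fin m => (1:ℝ)) = Vm m * Em m * Wm m := by
  have hJV : (Matrix.of fun _ _ : Fin m => (1:ℝ)) * Vm m = Vm m * Em m := by
    ext i j
    rw [Matrix.mul_apply, Em, Matrix.mul_diagonal]
    simp only [Matrix.of_apply, one_mul]
    rw [Vm_colsum]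
    by_cases hj : j = 0 <;> simp [hj, Vm_col0]
  calc (Matrix.of fun _ _ : Fin m => (1:ℝ))
      = (Matrix.of fun _ _ : Fin m => (1:ℝ)) * (Vm m * Wm m) := by rw [VW, mul_one]
    _ = Vm m * Em m * Wm m := by rw [← mul_assoc, hJV]

end Jm

open Kronecker in
/-- Spectrum of the clique blow-up `G ⊛ J_m`: if `A` is the adjacency matrix of `G` on
`n` vertices, the matrix `(A + I) ⊗ J_m - I` has as eigenvalue multiset the image of the
spectrum of `G` under `λ ↦ mλ + m - 1` together with `-1` with multiplicity `nm - n`. -/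
theorem stmt_7 {n m : ℕ} (hm : 0 < m) (G : SimpleGraph (Fin n)) :
    ((adjm G + 1) ⊗ₖ (Matrix.of fun _ _ : Fin m => (1 : ℝ)) -
        (1 : Matrix (Fin n × Fin m) (Fin n × Fin m) ℝ)).charpoly.roots =
      (spec G).map (fun x : ℝ => (m : ℝ) * x + m - 1) +
        Multiset.replicate (n * m - n) (-1) := by
  haveI : NeZero m := ⟨hm.ne'⟩
  have hA : (adjm G).IsHermitian := by
    rw [Matrix.IsHermitian, Matrix.conjTranspose_eq_transpose_of_trivial]
    unfold adjm
    exact @SimpleGraph.isSymm_adjMatrix _ _ G (Classical.decRel _) _ _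
  set μ : Fin n → ℝ := hA.eigenvalues with hμ
  set U : Matrix (Fin n) (Fin n) ℝ := (hA.eigenvectorUnitary : Matrix (Fin n) (Fin n) ℝ) with hUdef
  have hUU : U * star U = 1 := Matrix.mem_unitaryGroup_iff.mp hA.eigenvectorUnitary.2
  have hspec : adjm G = U * Matrix.diagonal μ * star U := by
    simpa [Function.comp] using hA.spectral_theorem
  -- spectrum of G
  have hspecG : spec G = Finset.univ.val.map μ := by
    show (adjm G).charpoly.roots = _
    rw [hspec, charpoly_conj' U _ (star U) hUU, charpoly_diag, roots_prod_X_sub_C'']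
  -- the conjugated diagonal form of the big matrix
  have hA1 : adjm G + 1 = U * Matrix.diagonal (fun i => μ i + 1) * star U := by
    have hd : (Matrix.diagonal (fun i => μ i + 1) : Matrix (Fin n) (Fin n) ℝ)
        = Matrix.diagonal μ + 1 := by
      rw [← Matrix.diagonal_one, Matrix.diagonal_add]
    rw [hspec, hd, mul_add, mul_one, add_mul, hUU]
  set g : Fin n × Fin m → ℝ :=
    fun p => (μ p.1 + 1) * (if p.2 = 0 then (m:ℝ) else 0) - 1 with hg
  set P : Matrix (Fin n × Fin m) (Fin n × Fin m) ℝ := U ⊗ₖ Vm m with hP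
  set Q : Matrix (Fin n × Fin m) (Fin n × Fin m) ℝ := (star U) ⊗ₖ Wm m with hQ
  have hPQ : P * Q = 1 := by
    rw [hP, hQ, ← Matrix.mul_kronecker_mul, hUU, VW, Matrix.one_kronecker_one]
  have hM : (adjm G + 1) ⊗ₖ (Matrix.of fun _ _ : Fin m => (1 : ℝ)) -
      (1 : Matrix (Fin n × Fin m) (Fin n × Fin m) ℝ) = P * Matrix.diagonal g * Q := by
    rw [hA1, JVW (m := m), Matrix.mul_kronecker_mul, Matrix.mul_kronecker_mul]
    rw [show Matrix.diagonal (fun i => μ i + 1) ⊗ₖ Em m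
        = Matrix.diagonal fun p : Fin n × Fin m =>
            (μ p.1 + 1) * (if p.2 = 0 then (m:ℝ) else 0) from
      Matrix.diagonal_kronecker_diagonal _ _]
    rw [hg]
    have hdg : (Matrix.diagonal fun p : Fin n × Fin m =>
        (μ p.1 + 1) * (if p.2 = 0 then (m:ℝ) else 0) - 1)
        = (Matrix.diagonal fun p : Fin n × Fin m =>
            (μ p.1 + 1) * (if p.2 = 0 then (m:ℝ) else 0)) - 1 := by
      rw [← Matrix.diagonal_one, Matrix.diagonal_sub]
    rw [hdg, mul_sub, sub_mul, mul_one, hPQ, ← hP, ← hQ]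
  rw [hM, charpoly_conj' P _ Q hPQ, charpoly_diag]
  -- compute the product
  have hsplit : (∏ p : Fin n × Fin m, (X - C (g p)))
      = (∏ i : Fin n, (X - C ((m:ℝ) * μ i + m - 1))) * (X + 1) ^ ((m - 1) * n) := by
    rw [Fintype.prod_prod_type]
    have hinner : ∀ i : Fin n, (∏ j : Fin m, (X - C (g (i, j))))
        = (X - C ((m:ℝ) * μ i + m - 1)) * (X + 1) ^ (m - 1) := by
      intro i
      have hval : g (i, (0 : Fin m)) = (m:ℝ) * μ i + m - 1 := by
        simp only [hg]; simp; ring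
      have hval2 : ∀ j : Fin m, j ≠ 0 → (X - C (g (i, j))) = X + 1 := by
        intro j hj
        have hgj : g (i, j) = -1 := by simp only [hg]; simp [hj]
        rw [hgj, map_neg, map_one, sub_neg_eq_add]
      rw [← Finset.mul_prod_erase Finset.univ _ (Finset.mem_univ (0 : Fin m)), hval,
        Finset.prod_congr rfl (fun j hj => hval2 j (Finset.ne_of_mem_erase hj)),
        Finset.prod_const, Finset.card_erase_of_mem (Finset.mem_univ _),
        Finset.card_univ, Fintype.card_fin]
    rw [Finset.prod_congr rfl (fun i _ => hinner i), Finset.prod_mul_distrib,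
      Finset.prod_const, Finset.card_univ, Fintype.card_fin, ← pow_mul]
  rw [hsplit]
  have hne : (∏ i : Fin n, (X - C ((m:ℝ) * μ i + m - 1))) * (X + 1) ^ ((m - 1) * n) ≠ 0 := by
    apply Polynomial.Monic.ne_zero
    exact ((monic_prod_of_monic _ _ (fun i _ => monic_X_sub_C _)).mul
      ((monic_X_add_C 1).pow _))
  rw [roots_mul hne, roots_prod_X_sub_C'']
  have hX1 : (X + 1 : ℝ[X]) = X - C (-1) := by rw [map_neg, sub_neg_eq_add, map_one]
  rw [hX1, roots_pow, roots_X_sub_C, Multiset.nsmul_singleton]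
  have hcnt : (m - 1) * n = n * m - n := by
    cases m with
    | zero => omega
    | succ k => rw [Nat.add_sub_cancel, Nat.mul_succ, Nat.add_sub_cancel, Nat.mul_comm]
  rw [hspecG, Multiset.map_map, hcnt]
  rfl
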